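/- Let 𝒢 be a temporal graph with n vertices and lifetime T in which every snapshot has at least one edge, let ω ≥ 0, let k ≥ 1, and let 𝒜 be a partition of 𝒢 given by π: V × {1,…,T} → P for some finite label set P. Choose a function f: P → {1,…,k} uniformly at random and let 𝒝 be the partition given by f ∘ π (merging parts of 𝒜 that receive the same label). Then the expected temporal modularity satisfies E[q_ω(𝒢,𝒝)] = (1 − 1/k)·q_ω(𝒢,𝒜) + n·ω·(T−1)/(2·k·μ_ω(𝒢)). -/

import Mathlib

open Finset
open scoped Classical

namespace TemporalModularity

noncomputable section

variable {V : Type*} [Fintype V] {P : Type*}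

/-- Twice the number of edges of `G` with both endpoints in `A`
(the sum over ordered pairs of vertices of `A` of the adjacency indicator). -/
def twoE (G : SimpleGraph V) (A : Finset V) : ℝ :=
  ∑ u ∈ A, ∑ v ∈ A, if G.Adj u v then (1 : ℝ) else 0

/-- The degree of `v` in `G`, as a real number. -/
def deg (G : SimpleGraph V) (v : V) : ℝ :=
  ∑ u : V, if G.Adj v u then (1 : ℝ) else 0

/-- The number of edges of `G` (half the sum of the degrees), as a real number. -/
def numEdges (G : SimpleGraph V) : ℝ := (∑ v : V, deg G v) / 2

/-- The volume of `A` in `G`: the sum of the degrees of the vertices of `A`. -/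
def vol (G : SimpleGraph V) (A : Finset V) : ℝ := ∑ v ∈ A, deg G v

/-- The part with label `p` of the vertex partition induced by the labelling `π`. -/
def part (π : V → P) (p : P) : Finset V := univ.filter fun v => π v = p

/-- `Σ_{A ∈ 𝒜} (2 e_G(A) − vol_G(A)² / (2m))`, where `𝒜` is the partition of the
vertices induced by the labelling `π` (empty parts contribute zero). -/
def snapTerm (G : SimpleGraph V) (π : V → P) : ℝ :=
  ∑ p ∈ univ.image π,
    (twoE G (part π p) - vol G (part π p) ^ 2 / (2 * numEdges G))

/-- The static modularity `q(G,𝒜) = Σ_{A ∈ 𝒜} (e(A)/m − vol(A)²/(4m²))` of the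
partition induced by the labelling `π`. -/
def staticQ (G : SimpleGraph V) (π : V → P) : ℝ :=
  ∑ p ∈ univ.image π,
    (twoE G (part π p) / (2 * numEdges G) -
      vol G (part π p) ^ 2 / (4 * numEdges G ^ 2))

/-- The maximum static modularity `q*(G)` over all vertex partitions (every partition
of `V` is induced by some labelling `V → V`). -/
def staticQStar (G : SimpleGraph V) : ℝ := ⨆ π : V → V, staticQ G π

/-- The loyalty contribution `L(𝒜)` of the temporal partition `π` with lifetime `T`. -/
def loyalty (T : ℕ) (π : V → ℕ → P) : ℝ :=
  ∑ v : V, ∑ t ∈ Icc 1 (T - 1), if π v t = π v (t + 1) then (1 : ℝ) else 0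

/-- The per-time loyalty `L(𝒜,t)` of the temporal partition `π`. -/
def loyaltyAt (π : V → ℕ → P) (t : ℕ) : ℝ :=
  ∑ v : V, if π v t = π v (t + 1) then (1 : ℝ) else 0

/-- The normalisation factor `μ_ω(𝒢) = ω n (T−1)/2 + Σ_t m_t`. -/
def mu (G : ℕ → SimpleGraph V) (T : ℕ) (ω : ℝ) : ℝ :=
  ω * (Fintype.card V) * ((T : ℝ) - 1) / 2 + ∑ t ∈ Icc 1 T, numEdges (G t)

/-- The non-normalised temporal modularity of the restriction of the temporal graph
`G` to the time interval `[a,b]`, for the partition `π`. -/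
def qTildeI (G : ℕ → SimpleGraph V) (a b : ℕ) (ω : ℝ) (π : V → ℕ → P) : ℝ :=
  (∑ t ∈ Icc a b, snapTerm (G t) fun v => π v t) +
    ω * ∑ v : V, ∑ t ∈ Icc a (b - 1), if π v t = π v (t + 1) then (1 : ℝ) else 0

/-- The non-normalised temporal modularity `q̃_ω(𝒢,𝒜)` of the partition `π` of the
temporal graph `G` with lifetime `T`. -/
def qTilde (G : ℕ → SimpleGraph V) (T : ℕ) (ω : ℝ) (π : V → ℕ → P) : ℝ :=
  qTildeI G 1 T ω π

/-- The temporal modularity `q_ω(𝒢,𝒜)` of the partition `π` of the temporal graph `G`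
with lifetime `T`. -/
def qTemp (G : ℕ → SimpleGraph V) (T : ℕ) (ω : ℝ) (π : V → ℕ → P) : ℝ :=
  qTilde G T ω π / (2 * mu G T ω)

/-- The temporal modularity `q*_ω(𝒢)`: the maximum of `q_ω(𝒢,𝒜)` over all partitions
(every partition of `V × [T]` is induced by some labelling into `ℕ`). -/
def qTempStar (G : ℕ → SimpleGraph V) (T : ℕ) (ω : ℝ) : ℝ :=
  ⨆ π : V → ℕ → ℕ, qTemp G T ω π

/-- The temporal `k`-modularity `q*_{k,ω}(𝒢)`: the maximum of `q_ω(𝒢,𝒜)` over all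
partitions into at most `k` parts. -/
def qTempStarK (G : ℕ → SimpleGraph V) (T : ℕ) (ω : ℝ) (k : ℕ) : ℝ :=
  ⨆ π : V → ℕ → Fin k, qTemp G T ω π

/-- The maximum non-normalised temporal modularity of the restriction of `G` to the
time interval `[a,b]`, over all partitions. -/
def qTildeStarI (G : ℕ → SimpleGraph V) (a b : ℕ) (ω : ℝ) : ℝ :=
  ⨆ π : V → ℕ → ℕ, qTildeI G a b ω π

/-- The non-normalised temporal modularity `q̃*_ω(𝒢)` of the temporal graph `G` with
lifetime `T`. -/
def qTildeStar (G : ℕ → SimpleGraph V) (T : ℕ) (ω : ℝ) : ℝ := qTildeStarI G 1 T ω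

/-- The maximum non-normalised temporal modularity of the restriction of `G` to `[a,b]`
over partitions into at most `c` parts. -/
def qTildeStarKI (G : ℕ → SimpleGraph V) (a b : ℕ) (ω : ℝ) (c : ℕ) : ℝ :=
  ⨆ π : V → ℕ → Fin c, qTildeI G a b ω π

/-- The non-normalised temporal `c`-modularity `q̃*_{c,ω}(𝒢)`. -/
def qTildeStarK (G : ℕ → SimpleGraph V) (T : ℕ) (ω : ℝ) (c : ℕ) : ℝ :=
  qTildeStarKI G 1 T ω c

end



section AuxLemmas

variable {V : Type*} [Fintype V] {P : Type*} [Fintype P]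

/-- A classical equality indicator. -/
noncomputable def chi {α : Type*} (a b : α) : ℝ := if a = b then 1 else 0

lemma ite_eq_chi {α : Type*} (a b : α) [Decidable (a = b)] :
    (if a = b then (1 : ℝ) else 0) = chi a b := by
  by_cases h : a = b <;> simp [chi, h]

lemma sum_indicator_eq {k : ℕ} (hk : 1 ≤ k) (p q : P) :
    ∑ f : P → Fin k, chi (f p) (f q) =
      (Fintype.card (P → Fin k) : ℝ) *
        ((1 - 1 / (k : ℝ)) * chi p q + 1 / (k : ℝ)) := by
  haveI : NeZero k := ⟨by omega⟩
  have hk0 : (k : ℝ) ≠ 0 := Nat.cast_ne_zero.mpr (by omega)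
  by_cases hpq : p = q
  · subst hpq
    have h1 : ∀ f : P → Fin k, chi (f p) (f p) = 1 := fun f => by simp [chi]
    have h2 : chi p p = (1 : ℝ) := by simp [chi]
    simp only [h1, h2, Finset.sum_const, Finset.card_univ, nsmul_eq_mul, mul_one]
    field_simp
    ring
  · have h2 : chi p q = (0 : ℝ) := by simp [chi, hpq]
    rw [h2]
    set S := ∑ f : P → Fin k, chi (f p) (f q) with hS
    have hstep : ∀ j : Fin k, S = ∑ f : P → Fin k, chi (f p + j) (f q) := by
      intro j
      let e : (P → Fin k) ≃ (P → Fin k) :=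
        Equiv.piCongrRight fun x => if x = p then Equiv.addRight j else Equiv.refl (Fin k)
      rw [hS, ← Equiv.sum_comp e (fun f => chi (f p) (f q))]
      apply Finset.sum_congr rfl
      intro f _
      have h1 : (e f) p = f p + j := by simp [e]
      have h2 : (e f) q = f q := by simp [e, Ne.symm hpq]
      rw [h1, h2]
    have hcount : ∀ f : P → Fin k, ∑ j : Fin k, chi (f p + j) (f q) = 1 := by
      intro f
      have hiff : ∀ j : Fin k, (f p + j = f q) ↔ (j = f q - f p) := by
        intro j; rw [eq_sub_iff_add_eq, add_comm]
      unfold chi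
      simp only [hiff]
      rw [Finset.sum_ite_eq' Finset.univ (f q - f p) (fun _ => (1 : ℝ))]
      simp
    have key : (k : ℝ) * S = (Fintype.card (P → Fin k) : ℝ) := by
      have h1 : (k : ℝ) * S = ∑ _j : Fin k, S := by
        rw [Finset.sum_const, Finset.card_univ, Fintype.card_fin, nsmul_eq_mul]
      rw [h1]
      calc ∑ j : Fin k, S
          = ∑ j : Fin k, ∑ f : P → Fin k, chi (f p + j) (f q) :=
            Finset.sum_congr rfl fun j _ => hstep j
        _ = ∑ f : P → Fin k, ∑ j : Fin k, chi (f p + j) (f q) := Finset.sum_comm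
        _ = ∑ _f : P → Fin k, (1 : ℝ) := Finset.sum_congr rfl fun f _ => hcount f
        _ = (Fintype.card (P → Fin k) : ℝ) := by simp
    rw [mul_zero, zero_add, mul_one_div, eq_div_iff hk0, mul_comm]
    exact key

lemma deg_nonneg (G : SimpleGraph V) (v : V) : 0 ≤ deg G v :=
  Finset.sum_nonneg fun u _ => by by_cases h : G.Adj v u <;> simp [h]

lemma numEdges_pos {G : SimpleGraph V} (h : G.edgeSet.Nonempty) : 0 < numEdges G := by
  have hadj : ∃ u v : V, G.Adj u v := by
    obtain ⟨e, he⟩ := h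
    induction e using Sym2.ind with
    | _ u v => exact ⟨u, v, G.mem_edgeSet.mp he⟩
  obtain ⟨u, v, huv⟩ := hadj
  have h1 : (1 : ℝ) ≤ deg G u := by
    have := Finset.single_le_sum (f := fun w => if G.Adj u w then (1 : ℝ) else 0)
      (fun w _ => by by_cases h : G.Adj u w <;> simp [h]) (Finset.mem_univ v)
    simp only [if_pos huv] at this
    exact this
  have h2 : (1 : ℝ) ≤ ∑ w : V, deg G w := by
    have := Finset.single_le_sum (f := fun w => deg G w)
      (fun w _ => deg_nonneg G w) (Finset.mem_univ u)
    linarith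
  rw [numEdges]; linarith

lemma snapTerm_eq_pairs (G : SimpleGraph V) (π : V → P) :
    snapTerm G π = ∑ u : V, ∑ v : V, chi (π u) (π v) *
      ((if G.Adj u v then (1 : ℝ) else 0) - deg G u * deg G v / (2 * numEdges G)) := by
  have hpart : ∀ p : P, twoE G (part π p) - vol G (part π p) ^ 2 / (2 * numEdges G) =
      ∑ u ∈ part π p, ∑ v ∈ part π p,
        ((if G.Adj u v then (1 : ℝ) else 0) - deg G u * deg G v / (2 * numEdges G)) := by
    intro p
    have h2 : vol G (part π p) ^ 2 / (2 * numEdges G) =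
        ∑ u ∈ part π p, ∑ v ∈ part π p, deg G u * deg G v / (2 * numEdges G) := by
      rw [sq, vol, Finset.sum_mul_sum, Finset.sum_div]
      exact Finset.sum_congr rfl fun u _ => by rw [Finset.sum_div]
    rw [twoE, h2, ← Finset.sum_sub_distrib]
    exact Finset.sum_congr rfl fun u _ => by rw [← Finset.sum_sub_distrib]
  rw [snapTerm]
  calc ∑ p ∈ Finset.univ.image π,
        (twoE G (part π p) - vol G (part π p) ^ 2 / (2 * numEdges G))
      = ∑ p ∈ Finset.univ.image π, ∑ u ∈ Finset.univ.filter (fun u => π u = p),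
          ∑ v : V, chi (π u) (π v) *
            ((if G.Adj u v then (1 : ℝ) else 0) - deg G u * deg G v / (2 * numEdges G)) := by
        apply Finset.sum_congr rfl
        intro p _
        rw [hpart p]
        apply Finset.sum_congr rfl
        intro u hu
        have hu' : π u = p := (Finset.mem_filter.mp hu).2
        rw [part, Finset.sum_filter]
        apply Finset.sum_congr rfl
        intro v _
        by_cases h : π v = p
        · have hc : chi (π u) (π v) = 1 := by
            unfold chi; rw [if_pos (by rw [hu', h])]
          rw [if_pos h, hc, one_mul]
        · have hc : chi (π u) (π v) = 0 := by
            unfold chi; rw [if_neg (fun (hh : π u = π v) => h (hh ▸ hu'))]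
          rw [if_neg h, hc, zero_mul]
    _ = ∑ u : V, ∑ v : V, chi (π u) (π v) *
          ((if G.Adj u v then (1 : ℝ) else 0) - deg G u * deg G v / (2 * numEdges G)) :=
        Finset.sum_fiberwise_of_maps_to
          (fun u _ => Finset.mem_image_of_mem π (Finset.mem_univ u)) _

lemma sum_pairs_zero (G : SimpleGraph V) (hG : numEdges G ≠ 0) :
    ∑ u : V, ∑ v : V,
      ((if G.Adj u v then (1 : ℝ) else 0) - deg G u * deg G v / (2 * numEdges G)) = 0 := by
  have h1 : ∑ u : V, ∑ v : V, (if G.Adj u v then (1 : ℝ) else 0) = 2 * numEdges G := by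
    have h : ∑ u : V, ∑ v : V, (if G.Adj u v then (1 : ℝ) else 0) = ∑ u : V, deg G u := rfl
    rw [h, numEdges, mul_comm, div_mul_cancel₀ _ (two_ne_zero)]
  have h2 : ∑ u : V, ∑ v : V, deg G u * deg G v / (2 * numEdges G) = 2 * numEdges G := by
    have hs : ∑ u : V, ∑ v : V, deg G u * deg G v / (2 * numEdges G) =
        (∑ u : V, deg G u) * (∑ v : V, deg G v) / (2 * numEdges G) := by
      rw [Finset.sum_mul_sum, Finset.sum_div]
      exact Finset.sum_congr rfl fun u _ => by rw [Finset.sum_div]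
    have hd : ∑ u : V, deg G u = 2 * numEdges G := by
      rw [numEdges]; ring
    rw [hs, hd]
    field_simp
  simp only [Finset.sum_sub_distrib]
  rw [h1, h2, sub_self]

lemma exp_snapTerm {k : ℕ} (hk : 1 ≤ k) (G : SimpleGraph V) (hG : numEdges G ≠ 0)
    (π' : V → P) :
    ∑ f : P → Fin k, snapTerm G (fun v => f (π' v)) =
      (Fintype.card (P → Fin k) : ℝ) * ((1 - 1 / (k : ℝ)) * snapTerm G π') := by
  set N := (Fintype.card (P → Fin k) : ℝ) with hN
  calc ∑ f : P → Fin k, snapTerm G (fun v => f (π' v))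
      = ∑ f : P → Fin k, ∑ u : V, ∑ v : V, chi (f (π' u)) (f (π' v)) *
          ((if G.Adj u v then (1 : ℝ) else 0) - deg G u * deg G v / (2 * numEdges G)) :=
        Finset.sum_congr rfl fun f _ => snapTerm_eq_pairs G _
    _ = ∑ u : V, ∑ v : V, (∑ f : P → Fin k, chi (f (π' u)) (f (π' v))) *
          ((if G.Adj u v then (1 : ℝ) else 0) - deg G u * deg G v / (2 * numEdges G)) := by
        rw [Finset.sum_comm]
        apply Finset.sum_congr rfl
        intro u _
        rw [Finset.sum_comm]
        apply Finset.sum_congr rfl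
        intro v _
        rw [← Finset.sum_mul]
    _ = ∑ u : V, ∑ v : V,
          (N * ((1 - 1 / (k : ℝ)) * chi (π' u) (π' v) + 1 / (k : ℝ))) *
            ((if G.Adj u v then (1 : ℝ) else 0) - deg G u * deg G v / (2 * numEdges G)) := by
        apply Finset.sum_congr rfl
        intro u _
        apply Finset.sum_congr rfl
        intro v _
        rw [sum_indicator_eq hk]
    _ = N * ((1 - 1 / (k : ℝ)) * snapTerm G π') := by
        have split : ∀ u v : V,
            (N * ((1 - 1 / (k : ℝ)) * chi (π' u) (π' v) + 1 / (k : ℝ))) *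
              ((if G.Adj u v then (1 : ℝ) else 0) - deg G u * deg G v / (2 * numEdges G)) =
            (N * (1 - 1 / (k : ℝ))) * (chi (π' u) (π' v) *
              ((if G.Adj u v then (1 : ℝ) else 0) - deg G u * deg G v / (2 * numEdges G))) +
            (N * (1 / (k : ℝ))) *
              ((if G.Adj u v then (1 : ℝ) else 0) - deg G u * deg G v / (2 * numEdges G)) :=
          fun u v => by ring
        simp only [split, Finset.sum_add_distrib, ← Finset.mul_sum]
        rw [sum_pairs_zero G hG, snapTerm_eq_pairs G π']
        ring

end AuxLemmas

/-- Let `π : V × [T] → P` be a partition of `𝒢` with finite label set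
`P`, and let a function `f : P → [k]` be chosen uniformly at random; let `𝒝` be the
partition `f ∘ π`.  Then the expected temporal modularity of `𝒝` equals
`(1 − 1/k)·q_ω(𝒢,𝒜) + n ω (T−1)/(2 k μ_ω(𝒢))`. -/
theorem temporalModularity_random_merge_expectation {V : Type*} [Fintype V]
    {P : Type*} [Fintype P]
    (T : ℕ) (hT : 1 ≤ T) (G : ℕ → SimpleGraph V)
    (hE : ∀ t ∈ Icc 1 T, (G t).edgeSet.Nonempty)
    (ω : ℝ) (hω : 0 ≤ ω) (k : ℕ) (hk : 1 ≤ k) (π : V → ℕ → P) :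
    (∑ f : P → Fin k, qTemp G T ω (fun v t => f (π v t))) /
        (Fintype.card (P → Fin k) : ℝ) =
      (1 - 1 / (k : ℝ)) * qTemp G T ω π +
        (Fintype.card V : ℝ) * ω * ((T : ℝ) - 1) / (2 * (k : ℝ) * mu G T ω) := by
  classical
  haveI : NeZero k := ⟨by omega⟩
  set N := (Fintype.card (P → Fin k) : ℝ) with hNdef
  have hN : N ≠ 0 := Nat.cast_ne_zero.mpr Fintype.card_ne_zero
  have hk0 : (k : ℝ) ≠ 0 := Nat.cast_ne_zero.mpr (by omega)
  have hTcast : ((T - 1 : ℕ) : ℝ) = (T : ℝ) - 1 := by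
    rw [Nat.cast_sub hT, Nat.cast_one]
  have key : ∑ f : P → Fin k, qTilde G T ω (fun v t => f (π v t)) =
      N * ((1 - 1 / (k : ℝ)) * qTilde G T ω π +
        ω * (Fintype.card V : ℝ) * ((T : ℝ) - 1) / (k : ℝ)) := by
    unfold qTilde qTildeI
    simp only [ite_eq_chi]
    rw [Finset.sum_add_distrib]
    have p1 : ∑ f : P → Fin k, ∑ t ∈ Icc 1 T, snapTerm (G t) (fun v => f (π v t)) =
        N * ((1 - 1 / (k : ℝ)) * ∑ t ∈ Icc 1 T, snapTerm (G t) (fun v => π v t)) := by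
      rw [Finset.sum_comm]
      calc ∑ t ∈ Icc 1 T, ∑ f : P → Fin k, snapTerm (G t) (fun v => f (π v t))
          = ∑ t ∈ Icc 1 T, N * ((1 - 1 / (k : ℝ)) * snapTerm (G t) (fun v => π v t)) :=
            Finset.sum_congr rfl fun t ht =>
              exp_snapTerm hk (G t) (ne_of_gt (numEdges_pos (hE t ht))) _
        _ = _ := by simp_rw [← Finset.mul_sum]
    have p2 : ∑ f : P → Fin k, ω * ∑ v : V, ∑ t ∈ Icc 1 (T - 1),
          chi (f (π v t)) (f (π v (t + 1))) =
        N * ((1 - 1 / (k : ℝ)) * (ω * ∑ v : V, ∑ t ∈ Icc 1 (T - 1),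
            chi (π v t) (π v (t + 1))) +
          ω * (Fintype.card V : ℝ) * ((T : ℝ) - 1) / (k : ℝ)) := by
      rw [← Finset.mul_sum, Finset.sum_comm]
      have hv : ∀ v : V, ∑ f : P → Fin k, ∑ t ∈ Icc 1 (T - 1),
          chi (f (π v t)) (f (π v (t + 1))) =
          (N * (1 - 1 / (k : ℝ))) * (∑ t ∈ Icc 1 (T - 1), chi (π v t) (π v (t + 1))) +
            ((T - 1 : ℕ) : ℝ) * (N * (1 / (k : ℝ))) := by
        intro v
        rw [Finset.sum_comm]
        calc ∑ t ∈ Icc 1 (T - 1), ∑ f : P → Fin k, chi (f (π v t)) (f (π v (t + 1)))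
            = ∑ t ∈ Icc 1 (T - 1),
                N * ((1 - 1 / (k : ℝ)) * chi (π v t) (π v (t + 1)) + 1 / (k : ℝ)) :=
              Finset.sum_congr rfl fun t _ => sum_indicator_eq hk _ _
          _ = ∑ t ∈ Icc 1 (T - 1),
                ((N * (1 - 1 / (k : ℝ))) * chi (π v t) (π v (t + 1)) + N * (1 / (k : ℝ))) :=
              Finset.sum_congr rfl fun t _ => by ring
          _ = (N * (1 - 1 / (k : ℝ))) * (∑ t ∈ Icc 1 (T - 1), chi (π v t) (π v (t + 1))) +
                ((T - 1 : ℕ) : ℝ) * (N * (1 / (k : ℝ))) := by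
              rw [Finset.sum_add_distrib, ← Finset.mul_sum, Finset.sum_const,
                Nat.card_Icc, Nat.add_sub_cancel, nsmul_eq_mul]
      calc ω * ∑ v : V, ∑ f : P → Fin k, ∑ t ∈ Icc 1 (T - 1),
            chi (f (π v t)) (f (π v (t + 1)))
          = ω * ∑ v : V,
              ((N * (1 - 1 / (k : ℝ))) * (∑ t ∈ Icc 1 (T - 1), chi (π v t) (π v (t + 1))) +
                ((T - 1 : ℕ) : ℝ) * (N * (1 / (k : ℝ)))) := by
            rw [Finset.sum_congr rfl fun v _ => hv v]
        _ = ω * ((N * (1 - 1 / (k : ℝ))) *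
              (∑ v : V, ∑ t ∈ Icc 1 (T - 1), chi (π v t) (π v (t + 1))) +
              (Fintype.card V : ℝ) * (((T - 1 : ℕ) : ℝ) * (N * (1 / (k : ℝ))))) := by
            rw [Finset.sum_add_distrib, ← Finset.mul_sum, Finset.sum_const,
              Finset.card_univ, nsmul_eq_mul]
        _ = N * ((1 - 1 / (k : ℝ)) * (ω * ∑ v : V, ∑ t ∈ Icc 1 (T - 1),
              chi (π v t) (π v (t + 1))) +
            ω * (Fintype.card V : ℝ) * ((T : ℝ) - 1) / (k : ℝ)) := by
            rw [hTcast]; ring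
    rw [p1, p2]
    ring
  unfold qTemp
  rw [← Finset.sum_div, key]
  set μ := mu G T ω with hμ
  set X := (1 - 1 / (k : ℝ)) * qTilde G T ω π +
      ω * (Fintype.card V : ℝ) * ((T : ℝ) - 1) / (k : ℝ) with hX
  have e1 : N * X / (2 * μ) / N = X / (2 * μ) := by
    rw [div_div, mul_comm (2 * μ) N, ← div_div, mul_div_cancel_left₀ _ hN]
  rw [e1, hX, add_div, mul_div_assoc]
  congr 1
  rw [div_div]
  ring

end TemporalModularity
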